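/- arXiv:2001.06368 — 6 statements merged into one kernel-verified Lean document; each statement's English description precedes it below -/
import Mathlib

section
/- Let n ∈ ℕ, g' ∈ {0, 1, 2}, and let a₁, …, aₙ be integers with each aᵢ ≥ 2. If ∑ᵢ (1 - 1/aᵢ) = 2 - g' (as rational numbers), then the multiset {a₁, …, aₙ} together with g' is one of: (g' = 2, empty multiset), (g' = 1, {2, 2}), (g' = 0, {2, 2, 2, 2}), (g' = 0, {2, 3, 6}), (g' = 0, {2, 4, 4}), (g' = 0, {3, 3, 3}). -/
lemma aux_small (p q r : ℤ) (hp : p = 2 ∨ p = 3) (hq : 2 ≤ q) (hr : 2 ≤ r)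
    (h : q*r + p*r + p*q = p*q*r) :
    ({p,q,r} : Multiset ℤ) = {2,3,6} ∨ ({p,q,r} : Multiset ℤ) = {2,4,4} ∨
    ({p,q,r} : Multiset ℤ) = {3,3,3} := by
  rcases hp with rfl | rfl
  · have e : (q-2)*(r-2) = 4 := by linear_combination -h
    have hq3 : 3 ≤ q := by
      rcases (by omega : q = 2 ∨ 3 ≤ q) with rfl | h3
      · simp at e
      · exact h3
    have hr3 : 3 ≤ r := by
      rcases (by omega : r = 2 ∨ 3 ≤ r) with rfl | h3
      · simp at e
      · exact h3
    have hq6 : q ≤ 6 := by nlinarith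
    have hr6 : r ≤ 6 := by nlinarith
    interval_cases q <;> interval_cases r <;> first | omega | decide
  · have e : (2*q-3)*(2*r-3) = 9 := by linear_combination -2*h
    have hq6 : q ≤ 6 := by nlinarith
    have hr6 : r ≤ 6 := by nlinarith
    interval_cases q <;> interval_cases r <;> first | omega | decide

lemma aux3 (p q r : ℤ) (hp : 2 ≤ p) (hq : 2 ≤ q) (hr : 2 ≤ r)
    (h : q*r + p*r + p*q = p*q*r) :
    ({p,q,r} : Multiset ℤ) = {2,3,6} ∨ ({p,q,r} : Multiset ℤ) = {2,4,4} ∨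
    ({p,q,r} : Multiset ℤ) = {3,3,3} := by
  have key : p ≤ 3 ∨ q ≤ 3 ∨ r ≤ 3 := by
    by_contra hc
    push_neg at hc
    obtain ⟨h1, h2, h3⟩ := hc
    nlinarith [mul_pos (by linarith : (0:ℤ) < p) (mul_pos (by linarith : (0:ℤ) < q) (by linarith : (0:ℤ) < r)),
      mul_nonneg (mul_nonneg (by linarith : (0:ℤ) ≤ p - 4) (by linarith : (0:ℤ) ≤ q)) (by linarith : (0:ℤ) ≤ r),
      mul_nonneg (mul_nonneg (by linarith : (0:ℤ) ≤ q - 4) (by linarith : (0:ℤ) ≤ p)) (by linarith : (0:ℤ) ≤ r),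
      mul_nonneg (mul_nonneg (by linarith : (0:ℤ) ≤ r - 4) (by linarith : (0:ℤ) ≤ p)) (by linarith : (0:ℤ) ≤ q)]
  rcases key with hk | hk | hk
  · exact aux_small p q r (by omega) hq hr h
  · have := aux_small q p r (by omega) hp hr (by linarith [h])
    simpa [Multiset.cons_swap] using this
  · have := aux_small r p q (by omega) hp hq (by linarith [h])
    have perm : ({r,p,q} : Multiset ℤ) = {p,q,r} := by
      show r ::ₘ p ::ₘ q ::ₘ 0 = p ::ₘ q ::ₘ r ::ₘ 0
      rw [Multiset.cons_swap r p, Multiset.cons_swap r q]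
    rw [perm] at this
    exact this

/-- Classification of the possible Seifert invariants of closed orientable
3-manifolds with Nil geometry: if `g' ∈ {0,1,2}`, each `aᵢ ≥ 2` and
`∑ᵢ (1 - 1/aᵢ) = 2 - g'` (in `ℚ`), then `(g', {a₁,…,aₙ})` is one of the six
listed possibilities. -/
theorem nil_seifert_classification (n : ℕ) (g' : ℕ) (hg : g' ≤ 2)
    (a : Fin n → ℤ) (ha : ∀ i, 2 ≤ a i)
    (h : ∑ i, (1 - 1 / (a i : ℚ)) = 2 - (g' : ℚ)) :
    (g' = 2 ∧ Finset.univ.val.map a = 0) ∨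
    (g' = 1 ∧ Finset.univ.val.map a = {2, 2}) ∨
    (g' = 0 ∧ Finset.univ.val.map a = {2, 2, 2, 2}) ∨
    (g' = 0 ∧ Finset.univ.val.map a = {2, 3, 6}) ∨
    (g' = 0 ∧ Finset.univ.val.map a = {2, 4, 4}) ∨
    (g' = 0 ∧ Finset.univ.val.map a = {3, 3, 3}) := by
  have hQ2 : ∀ i, (2:ℚ) ≤ (a i : ℚ) := fun i => by exact_mod_cast ha i
  have hQpos : ∀ i, (0:ℚ) < (a i : ℚ) := fun i => by linarith [hQ2 i]
  have hinv : ∀ i, 1 / (a i : ℚ) ≤ 1/2 := fun i => by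
    rw [div_le_div_iff₀ (hQpos i) (by norm_num)]
    linarith [hQ2 i]
  have hinvpos : ∀ i, (0:ℚ) < 1 / (a i : ℚ) := fun i => one_div_pos.mpr (hQpos i)
  have hb : ∀ i, (1:ℚ)/2 ≤ 1 - 1 / (a i : ℚ) := fun i => by linarith [hinv i]
  have hn4 : n ≤ 4 := by
    by_contra hn
    push_neg at hn
    have h5 : (5:ℚ) ≤ n := by exact_mod_cast hn
    have hlow : (n:ℚ) * (1/2) ≤ ∑ i, (1 - 1 / (a i : ℚ)) := by
      calc (n:ℚ) * (1/2) = ∑ _i : Fin n, (1:ℚ)/2 := by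
            simp [Finset.sum_const, mul_comm]
        _ ≤ _ := Finset.sum_le_sum fun i _ => hb i
    have : (g':ℚ) ≥ 0 := by positivity
    linarith
  interval_cases n
  · -- n = 0
    left
    simp only [Finset.univ_eq_empty, Finset.sum_empty] at h
    have : (g':ℚ) = 2 := by linarith
    exact ⟨by exact_mod_cast this, rfl⟩
  · -- n = 1
    exfalso
    rw [Fin.sum_univ_one] at h
    have h1 : (1:ℚ) < g' := by linarith [hinvpos 0]
    have h2 : (g':ℚ) < 2 := by linarith [hinv 0]
    have : 1 < g' := by exact_mod_cast h1
    have : (g' : ℤ) < 2 := by exact_mod_cast h2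
    omega
  · -- n = 2
    rw [Fin.sum_univ_two] at h
    have hgq : (g':ℚ) = 1/(a 0 : ℚ) + 1/(a 1 : ℚ) := by linarith
    have hg1 : g' = 1 := by
      have h1 : (0:ℚ) < g' := by rw [hgq]; linarith [hinvpos 0, hinvpos 1]
      have h2 : (g':ℚ) ≤ 1 := by rw [hgq]; linarith [hinv 0, hinv 1]
      have : 0 < g' := by exact_mod_cast h1
      have : (g' : ℤ) ≤ 1 := by exact_mod_cast h2
      omega
    subst hg1
    have hx : 1/(a 0 : ℚ) = 1/2 := by
      have : (1:ℚ) = 1/(a 0 : ℚ) + 1/(a 1 : ℚ) := by rw [← hgq]; norm_num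
      linarith [hinv 0, hinv 1]
    have hy : 1/(a 1 : ℚ) = 1/2 := by
      have : (1:ℚ) = 1/(a 0 : ℚ) + 1/(a 1 : ℚ) := by rw [← hgq]; norm_num
      linarith [hinv 0, hinv 1]
    have ha0 : a 0 = 2 := by
      have : (a 0 : ℚ) = 2 := by
        rw [div_eq_div_iff (ne_of_gt (hQpos 0)) (by norm_num)] at hx
        linarith
      exact_mod_cast this
    have ha1 : a 1 = 2 := by
      have : (a 1 : ℚ) = 2 := by
        rw [div_eq_div_iff (ne_of_gt (hQpos 1)) (by norm_num)] at hy
        linarith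
      exact_mod_cast this
    right; left
    refine ⟨rfl, ?_⟩
    have hmap : Finset.univ.val.map a = {a 0, a 1} := rfl
    rw [hmap, ha0, ha1]
  · -- n = 3
    rw [Fin.sum_univ_three] at h
    have hg0 : g' = 0 := by
      have h1 : (g':ℚ) < 1 := by linarith [hinv 0, hinv 1, hinv 2, hinvpos 0]
      have : g' < 1 := by exact_mod_cast h1
      omega
    subst hg0
    have hsum : 1/(a 0 : ℚ) + 1/(a 1 : ℚ) + 1/(a 2 : ℚ) = 1 := by
      push_cast at h
      linarith
    have hne : ∀ i, ((a i : ℚ)) ≠ 0 := fun i => ne_of_gt (hQpos i)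
    have hZ : a 1 * a 2 + a 0 * a 2 + a 0 * a 1 = a 0 * a 1 * a 2 := by
      have h' := hsum
      field_simp [hne 0, hne 1, hne 2] at h'
      have h'' : ((a 1 * a 2 + a 0 * a 2 + a 0 * a 1 : ℤ) : ℚ)
          = ((a 0 * a 1 * a 2 : ℤ) : ℚ) := by
        push_cast
        linear_combination h'
      exact_mod_cast h''
    have hres := aux3 (a 0) (a 1) (a 2) (ha 0) (ha 1) (ha 2) hZ
    have hmap : Finset.univ.val.map a = {a 0, a 1, a 2} := rfl
    rcases hres with h' | h' | h'
    · right; right; right; left; exact ⟨rfl, by rw [hmap]; exact h'⟩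
    · right; right; right; right; left; exact ⟨rfl, by rw [hmap]; exact h'⟩
    · right; right; right; right; right; exact ⟨rfl, by rw [hmap]; exact h'⟩
  · -- n = 4
    rw [Fin.sum_univ_four] at h
    have hg0 : g' = 0 := by
      have h1 : (g':ℚ) < 1 := by linarith [hinv 0, hinv 1, hinv 2, hinv 3]
      have : g' < 1 := by exact_mod_cast h1
      omega
    subst hg0
    have hsum : 1/(a 0 : ℚ) + 1/(a 1 : ℚ) + 1/(a 2 : ℚ) + 1/(a 3 : ℚ) = 2 := by
      push_cast at h
      linarith
    have toeq : ∀ i : Fin 4, (1:ℚ)/2 ≤ 1/(a i:ℚ) → a i = 2 := by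
      intro i hi
      have h2 : (a i : ℚ) ≤ 2 := by
        rw [div_le_div_iff₀ (by norm_num) (hQpos i)] at hi
        linarith
      have h2' : a i ≤ 2 := by exact_mod_cast h2
      have := ha i
      omega
    have e0 : a 0 = 2 := toeq 0 (by linarith [hinv 1, hinv 2, hinv 3])
    have e1 : a 1 = 2 := toeq 1 (by linarith [hinv 0, hinv 2, hinv 3])
    have e2 : a 2 = 2 := toeq 2 (by linarith [hinv 0, hinv 1, hinv 3])
    have e3 : a 3 = 2 := toeq 3 (by linarith [hinv 0, hinv 1, hinv 2])
    right; right; left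
    refine ⟨rfl, ?_⟩
    have hmap : Finset.univ.val.map a = {a 0, a 1, a 2, a 3} := rfl
    rw [hmap, e0, e1, e2, e3]
end

section
/- Let b be an odd positive integer and let G be the group with presentation ⟨v₁, v₂, h | v₁hv₁⁻¹h, v₂hv₂⁻¹h, v₁²v₂²h^{-b}⟩. Then the abelianization of G is isomorphic to ℤ ⊕ ℤ/4, where the ℤ factor is generated by the image of v₁, the ℤ/4 factor is generated by the image of v₁v₂, and the image of h equals twice the image of v₁v₂. -/
/-- Relations of the fundamental group of `M_K(b)`:
generators `v₁ = 0`, `v₂ = 1`, `h = 2`;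
relations `v₁hv₁⁻¹h`, `v₂hv₂⁻¹h`, `v₁²v₂²h^{-b}`. -/
def relsK (b : ℤ) : Set (FreeGroup (Fin 3)) :=
  { .of 0 * .of 2 * (.of 0)⁻¹ * .of 2,
    .of 1 * .of 2 * (.of 1)⁻¹ * .of 2,
    .of 0 * .of 0 * .of 1 * .of 1 * (.of 2) ^ (-b) }

abbrev TTK := Multiplicative (ℤ × ZMod 4)

def fK : Fin 3 → TTK :=
  ![Multiplicative.ofAdd (1,0), Multiplicative.ofAdd (-1,1), Multiplicative.ofAdd (0,2)]

lemma TTK_hom_ext {M : Type*} [Group M] {f g : TTK →* M}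
    (h1 : f (Multiplicative.ofAdd (1,0)) = g (Multiplicative.ofAdd (1,0)))
    (h2 : f (Multiplicative.ofAdd (0,1)) = g (Multiplicative.ofAdd (0,1))) : f = g := by
  refine MonoidHom.ext fun x => ?_
  have hx : x = (Multiplicative.ofAdd ((1:ℤ),(0:ZMod 4)))^(Multiplicative.toAdd x).1 *
      (Multiplicative.ofAdd ((0:ℤ),(1:ZMod 4)))^((Multiplicative.toAdd x).2.val) := by
    rw [← ofAdd_zsmul, ← ofAdd_nsmul, ← ofAdd_add]
    simp [Prod.ext_iff, ZMod.natCast_val, ZMod.cast_id]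
  rw [hx, map_mul, map_zpow, map_pow, map_mul, map_zpow, map_pow, h1, h2]

lemma hrelsK (b : ℕ) (hodd : Odd b) :
    ∀ r ∈ relsK b, FreeGroup.lift fK r = 1 := by
  obtain ⟨k, hk⟩ := hodd
  intro r hr
  have h4 : ((4:ℕ) : ZMod 4) = 0 := by decide
  rcases hr with rfl | rfl | rfl <;>
    simp only [map_mul, map_inv, map_zpow, FreeGroup.lift_apply_of, fK, Matrix.cons_val_zero,
      Matrix.cons_val_one, Matrix.head_cons, Matrix.cons_val_two, Matrix.tail_cons,
      ← ofAdd_add, ← ofAdd_neg, ← ofAdd_zsmul, ofAdd_eq_one, Prod.ext_iff]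
  all_goals (constructor)
  all_goals (try (first | decide | (simp; done)))
  subst hk
  push_cast at h4 ⊢
  simp only [Prod.snd_add, Prod.smul_snd, Prod.snd_zero]
  rw [zsmul_eq_mul]
  push_cast
  linear_combination (-(k : ZMod 4)) * h4

theorem abelianization_MK_odd (b : ℕ) (hb : 0 < b) (hodd : Odd b) :
    ∃ e : Abelianization (PresentedGroup (relsK b)) ≃* Multiplicative (ℤ × ZMod 4),
      e (Abelianization.of (PresentedGroup.of 0)) = Multiplicative.ofAdd (1, 0) ∧
      e (Abelianization.of (PresentedGroup.of 0 * PresentedGroup.of 1)) =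
        Multiplicative.ofAdd (0, 1) ∧
      e (Abelianization.of (PresentedGroup.of 2)) = Multiplicative.ofAdd (0, 2) := by
  classical
  set G := PresentedGroup (relsK (b:ℤ)) with hGdef
  let π : FreeGroup (Fin 3) →* Abelianization G :=
    Abelianization.of.comp (QuotientGroup.mk' (Subgroup.normalClosure (relsK (b:ℤ))))
  have hπ : ∀ r ∈ relsK (b:ℤ), π r = 1 := by
    intro r hr
    show Abelianization.of ((QuotientGroup.mk' _) r) = 1
    rw [QuotientGroup.mk'_apply,
      (QuotientGroup.eq_one_iff r).2 (Subgroup.subset_normalClosure hr)]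
    exact map_one (Abelianization.of (G := G))
  set a := Abelianization.of (G := G) (PresentedGroup.of 0) with ha
  set c := Abelianization.of (G := G) (PresentedGroup.of 1) with hc
  set H := Abelianization.of (G := G) (PresentedGroup.of 2) with hH
  have hπ0 : π (.of 0) = a := rfl
  have hπ1 : π (.of 1) = c := rfl
  have hπ2 : π (.of 2) = H := rfl
  have r1 : a * H * a⁻¹ * H = 1 := by
    have h := hπ _ (Set.mem_insert _ _)
    simp only [map_mul, map_inv, hπ0, hπ2] at h
    exact h
  have r3 : a * a * c * c * H ^ (-(b:ℤ)) = 1 := by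
    have h := hπ _ (Set.mem_insert_of_mem _ (Set.mem_insert_of_mem _ rfl))
    simp only [map_mul, map_zpow, hπ0, hπ1, hπ2] at h
    exact h
  have hH2 : H * H = 1 := by rwa [mul_comm a H, mul_inv_cancel_right] at r1
  have hHinv : H⁻¹ = H := (inv_eq_of_mul_eq_one_right hH2)
  have hH2' : H ^ (2:ℤ) = 1 := by rw [zpow_two]; exact hH2
  have hHb : H ^ (-(b:ℤ)) = H := by
    obtain ⟨k, hk⟩ := hodd
    have he : (-(b:ℤ)) = 2*(-(k:ℤ)) + (-1) := by subst hk; push_cast; ring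
    rw [he, zpow_add, zpow_mul, hH2', one_zpow, one_mul, zpow_neg_one, hHinv]
  have hacH : a * a * c * c = H := by
    have h := r3
    rw [hHb] at h
    exact (mul_eq_one_iff_eq_inv.mp h).trans hHinv
  have hsq : (a * c) ^ (2:ℕ) = a * a * c * c := by
    rw [mul_pow, sq, sq, ← mul_assoc, mul_assoc a a c]
  have h4 : (a * c) ^ (4:ℕ) = 1 := by
    rw [show (4:ℕ) = 2*2 from rfl, pow_mul, hsq, hacH, sq, hH2]
  -- the inverse homomorphism
  have hFc : (zmultiplesHom (Additive (Abelianization G)) (Additive.ofMul (a*c)))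
      (((4:ℕ):ℤ)) = 0 := by
    show (((4:ℕ):ℤ)) • Additive.ofMul (a*c) = 0
    rw [natCast_zsmul, ← ofMul_pow, h4, ofMul_one]
  let ψ : Multiplicative (ℤ × ZMod 4) →* Abelianization G :=
    AddMonoidHom.toMultiplicativeLeft
      ((zmultiplesHom (Additive (Abelianization G)) (Additive.ofMul a)).coprod
        (ZMod.lift 4 ⟨_, hFc⟩))
  have hψ : ∀ (m j : ℤ), ψ (Multiplicative.ofAdd (m, ((j : ZMod 4)))) = a ^ m * (a*c) ^ j := by
    intro m j
    show Additive.toMul (((zmultiplesHom (Additive (Abelianization G))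
      (Additive.ofMul a)).coprod (ZMod.lift 4 ⟨_, hFc⟩)) (m, ((j : ZMod 4)))) = _
    rw [AddMonoidHom.coprod_apply, ZMod.lift_coe]
    show Additive.toMul (m • Additive.ofMul a + j • Additive.ofMul (a*c)) = _
    rw [toMul_add, toMul_zsmul, toMul_zsmul]
    rfl
  -- the forward homomorphism
  let φ : Abelianization G →* Multiplicative (ℤ × ZMod 4) :=
    Abelianization.lift (PresentedGroup.toGroup (hrelsK b hodd))
  have hφ0 : φ a = Multiplicative.ofAdd ((1:ℤ), (0:ZMod 4)) := by
    show Abelianization.lift _ (Abelianization.of _) = _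
    rw [Abelianization.lift_apply_of, PresentedGroup.toGroup.of]
    rfl
  have hφ1 : φ c = Multiplicative.ofAdd ((-1:ℤ), (1:ZMod 4)) := by
    show Abelianization.lift _ (Abelianization.of _) = _
    rw [Abelianization.lift_apply_of, PresentedGroup.toGroup.of]
    rfl
  have hφ2 : φ H = Multiplicative.ofAdd ((0:ℤ), (2:ZMod 4)) := by
    show Abelianization.lift _ (Abelianization.of _) = _
    rw [Abelianization.lift_apply_of, PresentedGroup.toGroup.of]
    rfl
  have hψ10 : ψ (Multiplicative.ofAdd ((1:ℤ), (0:ZMod 4))) = a := by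
    have := hψ 1 0
    simpa using this
  have hψ01 : ψ (Multiplicative.ofAdd ((0:ℤ), (1:ZMod 4))) = a * c := by
    have := hψ 0 1
    simpa using this
  have hψm11 : ψ (Multiplicative.ofAdd ((-1:ℤ), (1:ZMod 4))) = c := by
    have := hψ (-1) 1
    simpa [inv_mul_cancel_left] using this
  have hψ02 : ψ (Multiplicative.ofAdd ((0:ℤ), (2:ZMod 4))) = H := by
    have := hψ 0 2
    simp only [zpow_zero, one_mul] at this
    rw [show ((2:ℤ):ZMod 4) = (2:ZMod 4) by norm_num] at this
    rw [this, show ((2:ℤ)) = ((2:ℕ):ℤ) from rfl, zpow_natCast, hsq, hacH]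
  have hcomp1 : ψ.comp φ = MonoidHom.id (Abelianization G) := by
    apply Abelianization.hom_ext
    apply PresentedGroup.ext
    intro x
    fin_cases x
    · show ψ (φ a) = a
      rw [hφ0, hψ10]
    · show ψ (φ c) = c
      rw [hφ1, hψm11]
    · show ψ (φ H) = H
      rw [hφ2, hψ02]
  have hcomp2 : φ.comp ψ = MonoidHom.id (Multiplicative (ℤ × ZMod 4)) := by
    apply TTK_hom_ext
    · show φ (ψ (Multiplicative.ofAdd ((1:ℤ),(0:ZMod 4)))) =
        Multiplicative.ofAdd ((1:ℤ),(0:ZMod 4))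
      rw [hψ10, hφ0]
    · show φ (ψ (Multiplicative.ofAdd ((0:ℤ),(1:ZMod 4)))) =
        Multiplicative.ofAdd ((0:ℤ),(1:ZMod 4))
      rw [hψ01, map_mul, hφ0, hφ1, ← ofAdd_add]
      norm_num
  refine ⟨MonoidHom.toMulEquiv φ ψ hcomp1 hcomp2, ?_, ?_, ?_⟩
  · exact hφ0
  · show φ (Abelianization.of (PresentedGroup.of 0 * PresentedGroup.of 1)) =
      Multiplicative.ofAdd ((0:ℤ),(1:ZMod 4))
    rw [map_mul, ← ha, ← hc, map_mul, hφ0, hφ1, ← ofAdd_add]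
    norm_num
  · exact hφ2
end

section
/- Let b be an even positive integer and let G be the group with presentation ⟨v₁, v₂, h | v₁hv₁⁻¹h, v₂hv₂⁻¹h, v₁²v₂²h^{-b}⟩. Then the abelianization of G is isomorphic to ℤ ⊕ ℤ/2 ⊕ ℤ/2, generated respectively by the images of v₁, v₁v₂, and h. -/
lemma relsK_one {b : ℤ} {r : FreeGroup (Fin 3)} (hr : r ∈ relsK b) :
    PresentedGroup.mk (relsK b) r = 1 :=
  (QuotientGroup.eq_one_iff r).mpr (Subgroup.subset_normalClosure hr)

-- forward map data
noncomputable def fwd (b : ℕ) (heven : Even b) :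
    PresentedGroup (relsK b) →* Multiplicative (ℤ × ZMod 2 × ZMod 2) :=
  PresentedGroup.toGroup (f := ![Multiplicative.ofAdd (1,0,0), Multiplicative.ofAdd (-1,1,0),
    Multiplicative.ofAdd (0,0,1)]) (by
    have hb2 : ((b : ℕ) : ZMod 2) = 0 := by
      rw [ZMod.natCast_eq_zero_iff]
      exact heven.two_dvd
    have hpow : (Multiplicative.ofAdd ((0,0,1) : ℤ × ZMod 2 × ZMod 2)) ^ b = 1 := by
      rw [← ofAdd_nsmul]
      simp [Prod.ext_iff, hb2]
    rintro r (rfl | rfl | rfl) <;>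
      simp [FreeGroup.lift_apply_of, hpow, ← ofAdd_add, ← ofAdd_neg, Prod.ext_iff] <;> decide)

section inv
variable (b : ℕ)

noncomputable def X : Abelianization (PresentedGroup (relsK (b:ℤ))) :=
  Abelianization.of (PresentedGroup.of 0)
noncomputable def V : Abelianization (PresentedGroup (relsK (b:ℤ))) :=
  Abelianization.of (PresentedGroup.of 1)
noncomputable def Z : Abelianization (PresentedGroup (relsK (b:ℤ))) :=
  Abelianization.of (PresentedGroup.of 2)

lemma of_mk (i : Fin 3) :
    Abelianization.of (PresentedGroup.mk (relsK (b:ℤ)) (FreeGroup.of i)) =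
      Abelianization.of (PresentedGroup.of i) := rfl

lemma Zsq : Z b * Z b = 1 := by
  have h := congrArg Abelianization.of (relsK_one (b := b) (Set.mem_insert _ _))
  simp only [map_mul, map_inv, map_one, of_mk] at h
  rw [← h, mul_right_comm _ _ ((Abelianization.of (PresentedGroup.of 0))⁻¹)]
  simp [Z, mul_comm]

lemma Ysq (heven : Even b) : (X b * V b) * (X b * V b) = 1 := by
  have h := congrArg Abelianization.of (relsK_one (b := b)
    (Set.mem_insert_iff.mpr (Or.inr (Set.mem_insert_iff.mpr (Or.inr rfl)))))
  simp only [map_mul, map_inv, map_one, map_zpow, of_mk] at h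
  obtain ⟨k, hk⟩ := heven
  have hZ2 : (Z b) ^ (2:ℤ) = 1 := by rw [show ((2:ℤ)=1+1) from rfl, zpow_add, zpow_one, Zsq]
  have hb : (-(b:ℤ)) = 2 * (-(k:ℤ)) := by rw [hk]; push_cast; ring
  have hZb : (Z b) ^ (-(b:ℤ)) = 1 := by rw [hb, zpow_mul, hZ2, one_zpow]
  rw [← h]
  unfold X V Z at *
  rw [hZb, mul_one, mul_mul_mul_comm, ← mul_assoc]
end inv

section psi
variable (b : ℕ) (heven : Even b)

noncomputable def psi' (heven : Even b) :
    (ℤ × ZMod 2 × ZMod 2) →+ Additive (Abelianization (PresentedGroup (relsK (b:ℤ)))) :=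
  ((zmultiplesHom _ (Additive.ofMul (X b))).comp (AddMonoidHom.fst ℤ (ZMod 2 × ZMod 2))) +
  ((ZMod.lift 2 ⟨zmultiplesHom _ (Additive.ofMul (X b * V b)), by
      simp [two_zsmul, ← ofMul_mul, Ysq b heven]⟩).comp
    ((AddMonoidHom.fst (ZMod 2) (ZMod 2)).comp (AddMonoidHom.snd ℤ (ZMod 2 × ZMod 2)))) +
  ((ZMod.lift 2 ⟨zmultiplesHom _ (Additive.ofMul (Z b)), by
      simp [two_zsmul, ← ofMul_mul, Zsq b]⟩).comp
    ((AddMonoidHom.snd (ZMod 2) (ZMod 2)).comp (AddMonoidHom.snd ℤ (ZMod 2 × ZMod 2))))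

noncomputable def psi (heven : Even b) :
    Multiplicative (ℤ × ZMod 2 × ZMod 2) →* Abelianization (PresentedGroup (relsK (b:ℤ))) :=
  AddMonoidHom.toMultiplicativeLeft (psi' b heven)

lemma one_zmod2 : (1 : ZMod 2) = ((1:ℤ) : ZMod 2) := by norm_num

lemma psi_apply (n : ℤ) (a c : ZMod 2) :
    psi b heven (Multiplicative.ofAdd (n, a, c)) =
      (X b) ^ n * Additive.toMul (ZMod.lift 2 ⟨zmultiplesHom _ (Additive.ofMul (X b * V b)), by
        simp [two_zsmul, ← ofMul_mul, Ysq b heven]⟩ a) *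
      Additive.toMul (ZMod.lift 2 ⟨zmultiplesHom _ (Additive.ofMul (Z b)), by
        simp [two_zsmul, ← ofMul_mul, Zsq b]⟩ c) := by
  simp [psi, psi', AddMonoidHom.coe_toMultiplicativeLeft, toMul_add, ← ofMul_zpow]

lemma psi_e1 : psi b heven (Multiplicative.ofAdd (1, 0, 0)) = X b := by
  rw [psi_apply]; simp

lemma psi_e2 : psi b heven (Multiplicative.ofAdd (-1, 1, 0)) = V b := by
  rw [psi_apply, one_zmod2, ZMod.lift_coe]
  simp [X, V]

lemma psi_e3 : psi b heven (Multiplicative.ofAdd (0, 0, 1)) = Z b := by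
  rw [psi_apply, one_zmod2, ZMod.lift_coe]
  simp

end psi

noncomputable def phi (b : ℕ) (heven : Even b) :
    Abelianization (PresentedGroup (relsK (b:ℤ))) →* Multiplicative (ℤ × ZMod 2 × ZMod 2) :=
  Abelianization.lift (fwd b heven)

lemma phi_of (b : ℕ) (heven : Even b) (i : Fin 3) :
    phi b heven (Abelianization.of (PresentedGroup.of i)) =
      ![Multiplicative.ofAdd (1,0,0), Multiplicative.ofAdd (-1,1,0),
        Multiplicative.ofAdd (0,0,1)] i := by
  simp [phi, fwd, PresentedGroup.toGroup.of]

lemma h1 (b : ℕ) (heven : Even b) :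
    (psi b heven).comp (phi b heven) = MonoidHom.id _ := by
  ext i
  fin_cases i <;>
    simp only [MonoidHom.comp_apply, MonoidHom.id_apply, phi_of, Matrix.cons_val_zero,
      Matrix.cons_val_one, Matrix.head_cons, Matrix.cons_val_two, Matrix.tail_cons] <;>
    [exact psi_e1 b heven; exact psi_e2 b heven; exact psi_e3 b heven]

lemma lift_one {n : ℕ} {A : Type*} [AddCommGroup A] (f : {f : ℤ →+ A // f (n : ℤ) = 0}) :
    ZMod.lift n f (1 : ZMod n) = f.val 1 := by
  rw [show (1 : ZMod n) = ((1:ℤ) : ZMod n) by norm_num, ZMod.lift_coe]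

lemma h2 (b : ℕ) (heven : Even b) :
    (phi b heven).comp (psi b heven) = MonoidHom.id _ := by
  apply MonoidHom.ext
  rintro ⟨n, a, c⟩
  show phi b heven (psi b heven (Multiplicative.ofAdd (n, a, c))) = Multiplicative.ofAdd (n, a, c)
  rw [psi_apply]
  have hX := phi_of b heven 0
  have hV := phi_of b heven 1
  have hZ := phi_of b heven 2
  simp only [Matrix.cons_val_zero, Matrix.cons_val_one, Matrix.head_cons, Matrix.cons_val_two,
    Matrix.tail_cons] at hX hV hZ
  rw [show a = ((ZMod.cast a : ℤ) : ZMod 2) from (ZMod.intCast_zmod_cast a).symm,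
    show c = ((ZMod.cast c : ℤ) : ZMod 2) from (ZMod.intCast_zmod_cast c).symm,
    ZMod.lift_coe, ZMod.lift_coe]
  simp [map_mul, map_zpow, X, V, Z, hX, hV, hZ,
    ← ofAdd_add, ← ofAdd_zsmul, Prod.ext_iff, zsmul_eq_mul, ZMod.intCast_zmod_cast]

theorem abelianization_MK_even (b : ℕ) (hb : 0 < b) (heven : Even b) :
    ∃ e : Abelianization (PresentedGroup (relsK b)) ≃* Multiplicative (ℤ × ZMod 2 × ZMod 2),
      e (Abelianization.of (PresentedGroup.of 0)) = Multiplicative.ofAdd (1, 0, 0) ∧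
      e (Abelianization.of (PresentedGroup.of 0 * PresentedGroup.of 1)) =
        Multiplicative.ofAdd (0, 1, 0) ∧
      e (Abelianization.of (PresentedGroup.of 2)) = Multiplicative.ofAdd (0, 0, 1) := by
  refine ⟨MonoidHom.toMulEquiv (phi b heven) (psi b heven) (h1 b heven) (h2 b heven),
    ?_, ?_, ?_⟩ <;>
  · rw [show ⇑(MonoidHom.toMulEquiv (phi b heven) (psi b heven) (h1 b heven) (h2 b heven))
        = ⇑(phi b heven) from rfl]
    have hX := phi_of b heven 0
    have hV := phi_of b heven 1
    have hZ := phi_of b heven 2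
    simp only [Matrix.cons_val_zero, Matrix.cons_val_one, Matrix.head_cons, Matrix.cons_val_two,
      Matrix.tail_cons] at hX hV hZ
    simp [map_mul, hX, hV, hZ, ← ofAdd_add, Prod.ext_iff]
end

section
/- Let b ∈ ℕ and let G be the group with presentation ⟨s₁, s₂, v₁, h | [s₁,h], [s₂,h], s₁²h, s₂²h, v₁hv₁⁻¹h, s₁s₂v₁²h^{-b}⟩. Then the abelianization of G is isomorphic to ℤ/4 ⊕ ℤ/4, generated by the images of v₁ and s₁; moreover in the abelianization the image of h equals −2·s₁ and the image of s₂ equals −(2b+1)·s₁ − 2·v₁. -/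
/-- Relations of the fundamental group of `M_22(b)`:
generators `s₁ = 0`, `s₂ = 1`, `v₁ = 2`, `h = 3`;
relations `[s₁,h]`, `[s₂,h]`, `s₁²h`, `s₂²h`, `v₁hv₁⁻¹h`, `s₁s₂v₁²h^{-b}`. -/
def rels22 (b : ℤ) : Set (FreeGroup (Fin 4)) :=
  { .of 0 * .of 3 * (.of 0)⁻¹ * (.of 3)⁻¹,
    .of 1 * .of 3 * (.of 1)⁻¹ * (.of 3)⁻¹,
    .of 0 * .of 0 * .of 3,
    .of 1 * .of 1 * .of 3,
    .of 2 * .of 3 * (.of 2)⁻¹ * .of 3,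
    .of 0 * .of 1 * .of 2 * .of 2 * (.of 3) ^ (-b) }

namespace M22

variable (b : ℕ)

/-- projection from the free group to the abelianization of the presented group -/
def π : FreeGroup (Fin 4) →* Abelianization (PresentedGroup (rels22 b)) :=
  (Abelianization.of).comp (QuotientGroup.mk' (Subgroup.normalClosure (rels22 b)))

lemma π_of (i : Fin 4) : π b (.of i) = Abelianization.of (PresentedGroup.of i) := rfl

lemma π_rel {r : FreeGroup (Fin 4)} (hr : r ∈ rels22 b) : π b r = 1 := by
  have : (QuotientGroup.mk r : PresentedGroup (rels22 b)) = 1 :=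
    (QuotientGroup.eq_one_iff r).mpr (Subgroup.subset_normalClosure hr)
  show Abelianization.of ((QuotientGroup.mk' (Subgroup.normalClosure (rels22 b))) r) = 1
  rw [QuotientGroup.mk'_apply, this, map_one]

/-- additive images of the generators -/
def g (i : Fin 4) : Additive (Abelianization (PresentedGroup (rels22 b))) :=
  Additive.ofMul (π b (.of i))

lemma rel3 : (2:ℤ) • g b 0 + g b 3 = 0 := by
  have := π_rel b (r := .of 0 * .of 0 * .of 3) (by simp [rels22])
  have h2 := congrArg Additive.ofMul this
  simp only [ofMul_mul, ofMul_one] at h2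
  rw [show (2:ℤ) • g b 0 + g b 3 = (g b 0 + g b 0) + g b 3 by module]
  exact h2

lemma rel4 : (2:ℤ) • g b 1 + g b 3 = 0 := by
  have := π_rel b (r := .of 1 * .of 1 * .of 3) (by simp [rels22])
  have h2 := congrArg Additive.ofMul this
  simp only [ofMul_mul, ofMul_one] at h2
  rw [show (2:ℤ) • g b 1 + g b 3 = (g b 1 + g b 1) + g b 3 by module]
  exact h2

lemma rel5 : (2:ℤ) • g b 3 = 0 := by
  have := π_rel b (r := .of 2 * .of 3 * (.of 2)⁻¹ * .of 3) (by simp [rels22])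
  have h2 := congrArg Additive.ofMul this
  simp only [ofMul_mul, ofMul_inv, ofMul_one] at h2
  rw [show (2:ℤ) • g b 3 = ((g b 2 + g b 3) + -(g b 2)) + g b 3 by module]
  exact h2

lemma rel6 : g b 0 + g b 1 + (2:ℤ) • g b 2 + (-(b:ℤ)) • g b 3 = 0 := by
  have := π_rel b (r := .of 0 * .of 1 * .of 2 * .of 2 * (.of 3) ^ (-(b:ℤ))) (by simp [rels22])
  have h2 := congrArg Additive.ofMul this
  simp only [ofMul_mul, ofMul_zpow, ofMul_one] at h2
  rw [show g b 0 + g b 1 + (2:ℤ) • g b 2 + (-(b:ℤ)) • g b 3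
      = (((g b 0 + g b 1) + g b 2) + g b 2) + (-(b:ℤ)) • g b 3 by module]
  exact h2

lemma four_s : (4:ℤ) • g b 0 = 0 := by
  have h1 := rel3 b; have h2 := rel5 b
  linear_combination (norm := module) (2:ℤ) • h1 - h2

lemma four_v : (4:ℤ) • g b 2 = 0 := by
  have h1 := rel3 b; have h2 := rel4 b; have h3 := rel5 b; have h4 := rel6 b
  linear_combination (norm := module) (2:ℤ) • h4 - h1 - h2 + ((b:ℤ) + 1) • h3

lemma h_eq : g b 3 = (-2:ℤ) • g b 0 := by
  have h1 := rel3 b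
  linear_combination (norm := module) h1

lemma t_eq : g b 1 = (-2:ℤ) • g b 2 + (-(2 * (b:ℤ) + 1)) • g b 0 := by
  have h1 := rel3 b; have h4 := rel6 b
  linear_combination (norm := module) h4 + (b:ℤ) • h1


/-- images of the generators in `ZMod 4 × ZMod 4` -/
def f0 : Fin 4 → Multiplicative (ZMod 4 × ZMod 4) :=
  ![Multiplicative.ofAdd (0, 1), Multiplicative.ofAdd (-2, -(2 * (b : ZMod 4) + 1)),
    Multiplicative.ofAdd (1, 0), Multiplicative.ofAdd (0, -2)]

lemma comm_one {M : Type*} [CommGroup M] (x y : M) : x * y * x⁻¹ * y⁻¹ = 1 := by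
  rw [mul_comm x y]; group

lemma f0_rels : ∀ r ∈ rels22 b, FreeGroup.lift (f0 b) r = 1 := by
  intro r hr
  simp only [rels22, Set.mem_insert_iff, Set.mem_singleton_iff] at hr
  rcases hr with rfl | rfl | rfl | rfl | rfl | rfl <;>
    simp only [map_mul, map_inv, map_zpow, FreeGroup.lift_apply_of, f0, Matrix.cons_val_zero,
      Matrix.cons_val_one, Matrix.head_cons, Matrix.cons_val_two, Matrix.tail_cons,
      Matrix.cons_val_three]
  · exact comm_one _ _
  · exact comm_one _ _
  · decide
  · simp only [← ofAdd_add, ofAdd_eq_one]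
    rw [show ((0 : ZMod 4 × ZMod 4)) = ((0 : ZMod 4), (0 : ZMod 4)) from rfl, Prod.mk.injEq,
      Prod.mk_add_mk, Prod.mk_add_mk]
    constructor
    · show ((-2 : ZMod 4) + -2 + 0) = 0
      decide
    · show (-(2 * (b : ZMod 4) + 1) + -(2 * (b : ZMod 4) + 1) + -2 : ZMod 4) = 0
      have h4 : (4 : ZMod 4) = 0 := rfl
      linear_combination (-(b : ZMod 4) - 1) * h4
  · decide
  · rw [← ofAdd_zsmul]
    simp only [← ofAdd_add, ofAdd_eq_one, Prod.smul_mk, Prod.mk_add_mk]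
    rw [show ((0 : ZMod 4 × ZMod 4)) = ((0 : ZMod 4), (0 : ZMod 4)) from rfl, Prod.mk.injEq]
    refine ⟨by simp [zsmul_eq_mul]; ring, ?_⟩
    simp only [zsmul_eq_mul, Int.cast_neg, Int.cast_natCast]
    ring

/-- the forward homomorphism -/
def F : Abelianization (PresentedGroup (rels22 b)) →* Multiplicative (ZMod 4 × ZMod 4) :=
  Abelianization.lift (PresentedGroup.toGroup (f0_rels b))

lemma F_g (i : Fin 4) : F b (Abelianization.of (PresentedGroup.of i)) = f0 b i := by
  simp [F]

/-- the backward homomorphism -/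
def B : Multiplicative (ZMod 4 × ZMod 4) →* Abelianization (PresentedGroup (rels22 b)) :=
  AddMonoidHom.toMultiplicativeLeft
    ((ZMod.lift 4 ⟨zmultiplesHom _ (g b 2), by simpa using four_v b⟩).coprod
     (ZMod.lift 4 ⟨zmultiplesHom _ (g b 0), by simpa using four_s b⟩))

lemma B_apply (k l : ℤ) :
    B b (Multiplicative.ofAdd ((k : ZMod 4), (l : ZMod 4)))
      = (k • g b 2 + l • g b 0).toMul := by
  simp only [B, AddMonoidHom.coe_toMultiplicativeLeft, Function.comp_apply, toAdd_ofAdd,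
    AddMonoidHom.coprod_apply, ZMod.lift_coe, zmultiplesHom_apply, toMul_add]

lemma left_aux : (B b).comp (F b) = MonoidHom.id _ := by
  apply Abelianization.hom_ext
  apply PresentedGroup.ext
  intro x
  have base : ∀ i : Fin 4,
      ((B b).comp (F b)).comp Abelianization.of (PresentedGroup.of i)
        = B b (f0 b i) := by
    intro i
    simp only [MonoidHom.comp_apply, F_g]
  fin_cases x <;>
    simp only [Fin.zero_eta, Fin.mk_one, Fin.reduceFinMk, Fin.isValue]
  · rw [base 0]
    have := B_apply b 0 1
    simp only [Int.cast_zero, Int.cast_one, zero_smul, one_smul, zero_add] at this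
    simpa [f0, g, π_of] using this
  · rw [base 1]
    have := B_apply b (-2) (-(2 * (b : ℤ) + 1))
    have h2 : B b (f0 b 1) = ((-2 : ℤ) • g b 2 + (-(2 * (b : ℤ) + 1)) • g b 0).toMul := by
      rw [← this]
      congr 1
      simp [f0, Prod.ext_iff]
    simp only [MonoidHom.comp_apply, MonoidHom.id_apply]
    rw [h2, ← t_eq b]
    rfl
  · rw [base 2]
    have := B_apply b 1 0
    simp only [Int.cast_zero, Int.cast_one, zero_smul, one_smul, add_zero] at this
    simpa [f0, g, π_of] using this
  · rw [base 3]
    have := B_apply b 0 (-2)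
    have h2 : B b (f0 b 3) = ((0 : ℤ) • g b 2 + (-2 : ℤ) • g b 0).toMul := by
      rw [← this]
      congr 1
      try simp [f0, Prod.ext_iff]
    simp only [MonoidHom.comp_apply, MonoidHom.id_apply]
    rw [h2, zero_smul, zero_add, ← h_eq b]
    rfl

lemma right_aux (x : Multiplicative (ZMod 4 × ZMod 4)) : F b (B b x) = x := by
  obtain ⟨k, hk⟩ := ZMod.intCast_surjective x.toAdd.1
  obtain ⟨l, hl⟩ := ZMod.intCast_surjective x.toAdd.2
  have hx : x = Multiplicative.ofAdd ((k : ZMod 4), (l : ZMod 4)) := by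
    rw [hk, hl]; rfl
  rw [hx, B_apply, toMul_add, toMul_zsmul, toMul_zsmul, map_mul, map_zpow, map_zpow]
  have hv : F b (g b 2).toMul = Multiplicative.ofAdd ((1 : ZMod 4), (0 : ZMod 4)) := by
    simpa [f0, g, π_of] using F_g b 2
  have hs : F b (g b 0).toMul = Multiplicative.ofAdd ((0 : ZMod 4), (1 : ZMod 4)) := by
    simpa [f0, g, π_of] using F_g b 0
  rw [hv, hs, ← ofAdd_zsmul, ← ofAdd_zsmul, ← ofAdd_add]
  congr 1
  simp [Prod.ext_iff, zsmul_eq_mul]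

/-- the equivalence -/
noncomputable def e : Abelianization (PresentedGroup (rels22 b)) ≃* Multiplicative (ZMod 4 × ZMod 4) where
  toFun := F b
  invFun := B b
  left_inv x := by
    have := DFunLike.congr_fun (left_aux b) x
    simpa using this
  right_inv := right_aux b
  map_mul' := map_mul (F b)

end M22


theorem abelianization_M22 (b : ℕ) :
    ∃ e : Abelianization (PresentedGroup (rels22 b)) ≃* Multiplicative (ZMod 4 × ZMod 4),
      e (Abelianization.of (PresentedGroup.of 2)) = Multiplicative.ofAdd (1, 0) ∧
      e (Abelianization.of (PresentedGroup.of 0)) = Multiplicative.ofAdd (0, 1) ∧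
      e (Abelianization.of (PresentedGroup.of 3)) = Multiplicative.ofAdd (0, -2) ∧
      e (Abelianization.of (PresentedGroup.of 1)) =
        Multiplicative.ofAdd (-2, -(2 * (b : ZMod 4) + 1)) := by
  refine ⟨M22.e b, ?_, ?_, ?_, ?_⟩
  · exact M22.F_g b 2
  · exact M22.F_g b 0
  · exact M22.F_g b 3
  · exact M22.F_g b 1
end

section
/- Let b ≥ −1 be an integer and let G be the group with presentation ⟨s₁, s₂, s₃, s₄, h | [sᵢ,h] and sᵢ²h for i = 1,…,4, s₁s₂s₃s₄h^{-b}⟩. Then the abelianization of G is isomorphic to ℤ/2 ⊕ ℤ/2 ⊕ ℤ/(4(b+2)), generated respectively by the images of s₂s₁⁻¹, s₃s₁⁻¹, and s₁. -/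
def rels2222 (b : ℤ) : Set (FreeGroup (Fin 5)) :=
  { r | (∃ i : Fin 4, r = .of i.castSucc * .of 4 * (.of i.castSucc)⁻¹ * (.of 4)⁻¹) ∨
        (∃ i : Fin 4, r = .of i.castSucc * .of i.castSucc * .of 4) ∨
        r = .of 0 * .of 1 * .of 2 * .of 3 * (.of 4) ^ (-b) }

namespace M2222

variable (b : ℤ)

abbrev N (b : ℤ) : ℕ := (4 * (b + 2)).toNat

abbrev T (b : ℤ) := Multiplicative (ZMod 2 × ZMod 2 × ZMod (N b))

noncomputable def fmap (b : ℤ) : Fin 5 → T b :=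
  ![Multiplicative.ofAdd (0, 0, 1),
    Multiplicative.ofAdd (1, 0, 1),
    Multiplicative.ofAdd (0, 1, 1),
    Multiplicative.ofAdd (1, 1, ((-(2*b) - 3 : ℤ) : ZMod (N b))),
    Multiplicative.ofAdd (0, 0, -2)]

lemma hNcast (hb : -1 ≤ b) : ((4 * (b + 2) : ℤ) : ZMod (N b)) = 0 := by
  have h : ((N b : ℤ) : ZMod (N b)) = 0 := by
    push_cast
    exact ZMod.natCast_self _
  rw [← h]
  congr 1
  rw [Int.toNat_of_nonneg (by linarith)]

lemma sqhelper (x y : ZMod 2) (z : ZMod (N b)) (hz : z + z + (-2) = 0) :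
    Multiplicative.ofAdd (x, y, z) * Multiplicative.ofAdd (x, y, z) *
      Multiplicative.ofAdd ((0 : ZMod 2), (0 : ZMod 2), (-2 : ZMod (N b))) = 1 := by
  rw [← ofAdd_add, ← ofAdd_add, ofAdd_eq_one]
  simp only [Prod.ext_iff, Prod.fst_add, Prod.snd_add, Prod.fst_zero, Prod.snd_zero, add_zero]
  exact ⟨CharTwo.add_self_eq_zero x, CharTwo.add_self_eq_zero y, hz⟩

lemma hrels (hb : -1 ≤ b) : ∀ r ∈ rels2222 b, FreeGroup.lift (fmap b) r = 1 := by
  have hN := hNcast b hb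
  push_cast at hN
  rintro r (⟨i, rfl⟩ | ⟨i, rfl⟩ | rfl)
  · simp only [map_mul, map_inv, FreeGroup.lift_apply_of]
    rw [mul_comm (fmap b i.castSucc) (fmap b 4)]
    group
  · simp only [map_mul, FreeGroup.lift_apply_of]
    fin_cases i
    · show fmap b 0 * fmap b 0 * fmap b 4 = 1
      exact sqhelper b _ _ _ (by ring)
    · show fmap b 1 * fmap b 1 * fmap b 4 = 1
      exact sqhelper b _ _ _ (by ring)
    · show fmap b 2 * fmap b 2 * fmap b 4 = 1
      exact sqhelper b _ _ _ (by ring)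
    · show fmap b 3 * fmap b 3 * fmap b 4 = 1
      exact sqhelper b _ _ _ (by push_cast; linear_combination -hN)
  · simp only [map_mul, map_zpow, FreeGroup.lift_apply_of]
    show Multiplicative.ofAdd (0, 0, 1) * Multiplicative.ofAdd (1, 0, 1) *
      Multiplicative.ofAdd (0, 1, 1) *
      Multiplicative.ofAdd ((1 : ZMod 2), (1 : ZMod 2), ((-(2*b) - 3 : ℤ) : ZMod (N b))) *
      Multiplicative.ofAdd ((0 : ZMod 2), (0 : ZMod 2), (-2 : ZMod (N b))) ^ (-b) = 1
    rw [← ofAdd_zsmul, ← ofAdd_add, ← ofAdd_add, ← ofAdd_add, ← ofAdd_add, ofAdd_eq_one]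
    simp only [Prod.ext_iff, Prod.fst_add, Prod.snd_add, Prod.smul_mk, Prod.fst_zero,
      Prod.snd_zero, smul_zero, zsmul_eq_mul]
    refine ⟨by decide, by decide, ?_⟩
    push_cast
    ring

abbrev G (b : ℤ) := PresentedGroup (rels2222 b)
abbrev Q (b : ℤ) := Abelianization (G b)

/-- canonical map from words to the abelianization -/
noncomputable def qm (b : ℤ) : FreeGroup (Fin 5) →* Q b :=
  (Abelianization.of (G := G b)).comp (PresentedGroup.mk (rels2222 b))

noncomputable def a (b : ℤ) (i : Fin 5) : Q b := qm b (FreeGroup.of i)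

lemma rel_one {r : FreeGroup (Fin 5)} (hr : r ∈ rels2222 b) : qm b r = 1 := by
  have : PresentedGroup.mk (rels2222 b) r = 1 :=
    (QuotientGroup.eq_one_iff r).mpr (Subgroup.subset_normalClosure hr)
  simp [qm, this]

lemma Esq (i : Fin 4) : a b i.castSucc * a b i.castSucc * a b 4 = 1 := by
  have := rel_one b (Or.inr (Or.inl ⟨i, rfl⟩))
  simpa [a, map_mul] using this

lemma Eprod : a b 0 * a b 1 * a b 2 * a b 3 * (a b 4) ^ (-b) = 1 := by
  have := rel_one b (Or.inr (Or.inr rfl))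
  simpa [a, map_mul, map_zpow] using this

lemma ha4 : a b 4 = (a b 0 * a b 0)⁻¹ := by
  rw [eq_inv_iff_mul_eq_one, mul_comm]
  exact Esq b 0

lemma hsq (i : Fin 4) : a b i.castSucc * a b i.castSucc = (a b 4)⁻¹ := by
  rw [eq_inv_iff_mul_eq_one]
  exact Esq b i

lemma h1 : a b 1 * a b 1 = a b 0 * a b 0 := by
  have h := (hsq b 1).trans (hsq b 0).symm
  exact h

lemma hp : a b 0 * a b 1 * a b 2 * a b 3 = (a b 4) ^ b := by
  have := Eprod b
  rw [zpow_neg, mul_inv_eq_one] at this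
  exact this


lemma hX2 : (a b 1 * (a b 0)⁻¹) ^ (2 : ℤ) = 1 := by
  have key : (a b 1 * (a b 0)⁻¹) ^ (2 : ℤ) = (a b 1 * a b 1) * (a b 0 * a b 0)⁻¹ := by
    rw [← Additive.ofMul.injective.eq_iff]
    simp only [ofMul_mul, ofMul_zpow, ofMul_inv, ofMul_one]
    module
  rw [key, h1, mul_inv_cancel]

lemma hsq0 : a b 0 * a b 0 = (a b 4)⁻¹ := hsq b 0
lemma hsq1 : a b 1 * a b 1 = (a b 4)⁻¹ := hsq b 1
lemma hsq2 : a b 2 * a b 2 = (a b 4)⁻¹ := hsq b 2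
lemma hsq3 : a b 3 * a b 3 = (a b 4)⁻¹ := hsq b 3

lemma h2 : a b 2 * a b 2 = a b 0 * a b 0 := (hsq b 2).trans (hsq b 0).symm

lemma h3 : a b 3 * a b 3 = a b 0 * a b 0 := (hsq b 3).trans (hsq b 0).symm

lemma hY2 : (a b 2 * (a b 0)⁻¹) ^ (2 : ℤ) = 1 := by
  have key : (a b 2 * (a b 0)⁻¹) ^ (2 : ℤ) = (a b 2 * a b 2) * (a b 0 * a b 0)⁻¹ := by
    rw [← Additive.ofMul.injective.eq_iff]
    simp only [ofMul_mul, ofMul_zpow, ofMul_inv, ofMul_one]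
    module
  rw [key, h2, mul_inv_cancel]

lemma hA4ord : (a b 4) ^ (2 * b + 4 : ℤ) = 1 := by
  have hsq4 : (a b 4) ^ b * (a b 4) ^ b =
      (a b 1 * a b 1) * ((a b 2 * a b 2) * ((a b 3 * a b 3) * (a b 0 * a b 0))) := by
    rw [← hp]
    rw [← Additive.ofMul.injective.eq_iff]
    simp only [ofMul_mul, ofMul_zpow, ofMul_inv, ofMul_one]
    module
  rw [hsq1, hsq2, hsq3, hsq0] at hsq4
  have key : (a b 4) ^ (2 * b + 4 : ℤ) =
      ((a b 4) ^ b * (a b 4) ^ b) * ((a b 4)⁻¹ * ((a b 4)⁻¹ * ((a b 4)⁻¹ * (a b 4)⁻¹)))⁻¹ := by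
    group
  rw [key, hsq4, mul_inv_cancel]

lemma hord (hb : -1 ≤ b) : (a b 0) ^ ((N b : ℕ) : ℤ) = 1 := by
  have hNZ : ((N b : ℕ) : ℤ) = 4 * (b + 2) := Int.toNat_of_nonneg (by linarith)
  have key : (a b 0) ^ ((N b : ℕ) : ℤ) = ((a b 4) ^ (2 * b + 4 : ℤ))⁻¹ := by
    rw [ha4, hNZ]
    rw [← Additive.ofMul.injective.eq_iff]
    simp only [ofMul_mul, ofMul_zpow, ofMul_inv, ofMul_one]
    module
  rw [key, hA4ord, inv_one]


lemma ha3' : a b 3 = (a b 0)⁻¹ * (a b 1)⁻¹ * (a b 2)⁻¹ * (a b 4) ^ b := by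
  rw [← hp]
  rw [← Additive.ofMul.injective.eq_iff]
  simp only [ofMul_mul, ofMul_zpow, ofMul_inv, ofMul_one]
  module

lemma hinv1 : (a b 1)⁻¹ = a b 1 * (a b 0 * a b 0)⁻¹ := by rw [← h1]; group

lemma hinv2 : (a b 2)⁻¹ = a b 2 * (a b 0 * a b 0)⁻¹ := by rw [← h2]; group

noncomputable def phi0 (hb : -1 ≤ b) : G b →* T b := PresentedGroup.toGroup (hrels b hb)

noncomputable def phi (hb : -1 ≤ b) : Q b →* T b := Abelianization.lift (phi0 b hb)

noncomputable def fX : ZMod 2 →+ Additive (Q b) :=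
  ZMod.lift 2 ⟨zmultiplesHom _ (Additive.ofMul (a b 1 * (a b 0)⁻¹)), by
    rw [zmultiplesHom_apply, ← ofMul_zpow]
    push_cast
    rw [hX2 b, ofMul_one]⟩

noncomputable def fY : ZMod 2 →+ Additive (Q b) :=
  ZMod.lift 2 ⟨zmultiplesHom _ (Additive.ofMul (a b 2 * (a b 0)⁻¹)), by
    rw [zmultiplesHom_apply, ← ofMul_zpow]
    push_cast
    rw [hY2 b, ofMul_one]⟩

noncomputable def fZ (hb : -1 ≤ b) : ZMod (N b) →+ Additive (Q b) :=
  ZMod.lift (N b) ⟨zmultiplesHom _ (Additive.ofMul (a b 0)), by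
    rw [zmultiplesHom_apply, ← ofMul_zpow, hord b hb, ofMul_one]⟩

noncomputable def psi (hb : -1 ≤ b) : T b →* Q b :=
  AddMonoidHom.toMultiplicativeLeft
    (((fX b).comp (AddMonoidHom.fst _ _)) +
      (((fY b).comp (AddMonoidHom.fst _ _)).comp (AddMonoidHom.snd _ _)) +
      (((fZ b hb).comp (AddMonoidHom.snd _ _)).comp (AddMonoidHom.snd _ _)))

lemma psi_cast (hb : -1 ≤ b) (i j k : ℤ) :
    psi b hb (Multiplicative.ofAdd ((i : ZMod 2), (j : ZMod 2), (k : ZMod (N b)))) =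
      (a b 1 * (a b 0)⁻¹) ^ i * (a b 2 * (a b 0)⁻¹) ^ j * (a b 0) ^ k := by
  show Additive.toMul ((fX b) (i : ZMod 2) + (fY b) (j : ZMod 2) + (fZ b hb) (k : ZMod (N b))) = _
  rw [fX, fY, fZ, ZMod.lift_coe, ZMod.lift_coe, ZMod.lift_coe, zmultiplesHom_apply,
    zmultiplesHom_apply, zmultiplesHom_apply, toMul_add, toMul_add, toMul_zsmul, toMul_zsmul,
    toMul_zsmul, toMul_ofMul, toMul_ofMul, toMul_ofMul]


lemma phi_a (hb : -1 ≤ b) (i : Fin 5) : phi b hb (a b i) = fmap b i := by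
  show phi b hb (Abelianization.of (PresentedGroup.of i)) = _
  rw [phi, Abelianization.lift_apply_of, phi0, PresentedGroup.toGroup.of]

lemma comp1 (hb : -1 ≤ b) : (psi b hb).comp (phi b hb) = MonoidHom.id (Q b) := by
  refine Abelianization.hom_ext _ _ (PresentedGroup.ext fun x => ?_)
  simp only [MonoidHom.comp_apply, MonoidHom.id_apply]
  have : Abelianization.of (PresentedGroup.of (rels := rels2222 b) x) = a b x := rfl
  rw [this, phi_a]
  fin_cases x
  · show psi b hb (fmap b 0) = a b 0
    have h : fmap b 0 =
        Multiplicative.ofAdd (((0 : ℤ) : ZMod 2), ((0 : ℤ) : ZMod 2), ((1 : ℤ) : ZMod (N b))) := by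
      norm_num [fmap]
    rw [h, psi_cast]
    simp
  · show psi b hb (fmap b 1) = a b 1
    have h : fmap b 1 =
        Multiplicative.ofAdd (((1 : ℤ) : ZMod 2), ((0 : ℤ) : ZMod 2), ((1 : ℤ) : ZMod (N b))) := by
      norm_num [fmap]
    rw [h, psi_cast]
    simp only [zpow_zero, zpow_one, mul_one]
    group
  · show psi b hb (fmap b 2) = a b 2
    have h : fmap b 2 =
        Multiplicative.ofAdd (((0 : ℤ) : ZMod 2), ((1 : ℤ) : ZMod 2), ((1 : ℤ) : ZMod (N b))) := by
      norm_num [fmap, Matrix.cons_val_two, Matrix.vecHead, Matrix.vecTail]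
    rw [h, psi_cast]
    simp only [zpow_zero, zpow_one, one_mul]
    group
  · show psi b hb (fmap b 3) = a b 3
    have h : fmap b 3 =
        Multiplicative.ofAdd (((1 : ℤ) : ZMod 2), ((1 : ℤ) : ZMod 2),
          ((-(2*b) - 3 : ℤ) : ZMod (N b))) := by
      norm_num [fmap, Matrix.vecHead, Matrix.vecTail]
      rfl
    rw [h, psi_cast]
    simp only [zpow_one]
    rw [ha3', hinv1, hinv2, ha4]
    rw [← Additive.ofMul.injective.eq_iff]
    simp only [ofMul_mul, ofMul_zpow, ofMul_inv, ofMul_one]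
    module
  · show psi b hb (fmap b 4) = a b 4
    have h : fmap b 4 =
        Multiplicative.ofAdd (((0 : ℤ) : ZMod 2), ((0 : ℤ) : ZMod 2), ((-2 : ℤ) : ZMod (N b))) := by
      norm_num [fmap, Matrix.vecHead, Matrix.vecTail]
      rfl
    rw [h, psi_cast]
    simp only [zpow_zero, one_mul]
    rw [ha4]
    group

lemma phiX (hb : -1 ≤ b) :
    phi b hb (a b 1 * (a b 0)⁻¹) = Multiplicative.ofAdd (1, 0, 0) := by
  rw [map_mul, map_inv, phi_a, phi_a]
  show Multiplicative.ofAdd ((1 : ZMod 2), (0 : ZMod 2), (1 : ZMod (N b))) *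
    (Multiplicative.ofAdd ((0 : ZMod 2), (0 : ZMod 2), (1 : ZMod (N b))))⁻¹ = _
  rw [← ofAdd_neg, ← ofAdd_add, Prod.neg_mk, Prod.neg_mk, Prod.mk_add_mk, Prod.mk_add_mk]
  norm_num

lemma phiY (hb : -1 ≤ b) :
    phi b hb (a b 2 * (a b 0)⁻¹) = Multiplicative.ofAdd (0, 1, 0) := by
  rw [map_mul, map_inv, phi_a, phi_a]
  show Multiplicative.ofAdd ((0 : ZMod 2), (1 : ZMod 2), (1 : ZMod (N b))) *
    (Multiplicative.ofAdd ((0 : ZMod 2), (0 : ZMod 2), (1 : ZMod (N b))))⁻¹ = _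
  rw [← ofAdd_neg, ← ofAdd_add, Prod.neg_mk, Prod.neg_mk, Prod.mk_add_mk, Prod.mk_add_mk]
  norm_num

lemma phiZ (hb : -1 ≤ b) :
    phi b hb (a b 0) = Multiplicative.ofAdd (0, 0, 1) := phi_a b hb 0

lemma comp2 (hb : -1 ≤ b) : (phi b hb).comp (psi b hb) = MonoidHom.id (T b) := by
  refine MonoidHom.ext fun w => ?_
  rcases hw : Multiplicative.toAdd w with ⟨x, y, z⟩
  obtain ⟨i, rfl⟩ := ZMod.intCast_surjective x
  obtain ⟨j, rfl⟩ := ZMod.intCast_surjective y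
  obtain ⟨k, rfl⟩ := ZMod.intCast_surjective z
  have hw' : w = Multiplicative.ofAdd ((i : ZMod 2), (j : ZMod 2), (k : ZMod (N b))) := by
    rw [← hw]; rfl
  rw [MonoidHom.comp_apply, MonoidHom.id_apply, hw', psi_cast, map_mul, map_mul, map_zpow,
    map_zpow, map_zpow, phiX b hb, phiY b hb, phiZ b hb, ← ofAdd_zsmul, ← ofAdd_zsmul,
    ← ofAdd_zsmul, ← ofAdd_add, ← ofAdd_add, Prod.smul_mk, Prod.smul_mk, Prod.smul_mk,
    Prod.mk_add_mk, Prod.mk_add_mk]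
  simp [Prod.ext_iff]


end M2222

open M2222 in
theorem abelianization_M2222 (b : ℤ) (hb : -1 ≤ b) :
    ∃ e : Abelianization (PresentedGroup (rels2222 b)) ≃*
        Multiplicative (ZMod 2 × ZMod 2 × ZMod (4 * (b + 2)).toNat),
      e (Abelianization.of (PresentedGroup.of 1 * (PresentedGroup.of 0)⁻¹)) =
        Multiplicative.ofAdd (1, 0, 0) ∧
      e (Abelianization.of (PresentedGroup.of 2 * (PresentedGroup.of 0)⁻¹)) =
        Multiplicative.ofAdd (0, 1, 0) ∧
      e (Abelianization.of (PresentedGroup.of 0)) = Multiplicative.ofAdd (0, 0, 1) := by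
  refine ⟨MonoidHom.toMulEquiv (phi b hb) (psi b hb) (comp1 b hb) (comp2 b hb), ?_, ?_, ?_⟩
  · show phi b hb (Abelianization.of (PresentedGroup.of 1 * (PresentedGroup.of 0)⁻¹)) = _
    rw [map_mul, map_inv]
    exact phiX b hb
  · show phi b hb (Abelianization.of (PresentedGroup.of 2 * (PresentedGroup.of 0)⁻¹)) = _
    rw [map_mul, map_inv]
    exact phiY b hb
  · exact phiZ b hb
end

section
/- Let G be the group with presentation ⟨s₁, s₂, v₁, h | [s₁,h], [s₂,h], s₁²h, s₂²h, v₁hv₁⁻¹h, s₁s₂v₁²h^{-b}⟩ (the fundamental group of M_22(b)) and let φ : G → ℤ/2 be any surjective homomorphism. Then φ(h) = 0 and φ(s₁) = φ(s₂). -/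
lemma sq_eq_one_zmod2 (a : Multiplicative (ZMod 2)) : a * a = 1 := by
  revert a; decide

/-- Any surjection `π₁(M_22(b)) ↠ ℤ/2` kills `h` and agrees on `s₁` and `s₂`. -/
theorem surj_M22_onto_ZMod2 (b : ℕ)
    (φ : PresentedGroup (rels22 b) →* Multiplicative (ZMod 2))
    (hφ : Function.Surjective φ) :
    φ (PresentedGroup.of 3) = 1 ∧ φ (PresentedGroup.of 0) = φ (PresentedGroup.of 1) := by
  set F : FreeGroup (Fin 4) →* Multiplicative (ZMod 2) :=
    φ.comp (QuotientGroup.mk' (Subgroup.normalClosure (rels22 (b : ℤ)))) with hF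
  have hrel : ∀ r ∈ rels22 (b : ℤ), F r = 1 := by
    intro r hr
    have : (QuotientGroup.mk' (Subgroup.normalClosure (rels22 (b : ℤ)))) r = 1 := by
      rw [QuotientGroup.mk'_apply, QuotientGroup.eq_one_iff]
      exact Subgroup.subset_normalClosure hr
    show φ ((QuotientGroup.mk' (Subgroup.normalClosure (rels22 (b : ℤ)))) r) = 1
    calc φ _ = φ 1 := congrArg φ this
    _ = 1 := map_one φ
  have hof : ∀ i : Fin 4, φ (PresentedGroup.of i) = F (FreeGroup.of i) := fun i => rfl
  have h3 : φ (PresentedGroup.of 3) = 1 := by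
    have := hrel (.of 0 * .of 0 * .of 3) (by simp [rels22])
    rw [map_mul, map_mul, sq_eq_one_zmod2, one_mul] at this
    rw [hof]; exact this
  refine ⟨h3, ?_⟩
  have h6 := hrel (.of 0 * .of 1 * .of 2 * .of 2 * (.of 3) ^ (-(b:ℤ))) (by simp [rels22])
  rw [map_mul, map_zpow] at h6
  have h3' : F (FreeGroup.of 3) = 1 := by rw [← hof]; exact h3
  rw [h3', one_zpow, mul_one, map_mul, map_mul, map_mul, mul_assoc, sq_eq_one_zmod2, mul_one] at h6
  rw [hof, hof]
  have := mul_eq_one_iff_eq_inv.mp h6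
  rw [this]
  have : ∀ a : Multiplicative (ZMod 2), a⁻¹ = a := by decide
  rw [this]
end
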